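/- arXiv:2408.12553 — 2 statements merged into one kernel-verified Lean document; each statement's English description precedes it below -/
import Mathlib

section
/- (Constant optimal price, Lemma 1 of the paper, linear case.) Let Λ : [0,T] → ℝ be nonnegative and integrable with ∫₀ᵀ Λ > 0, and v(p) = a - b·p with b > 0 on an interval where v > 0. Among all measurable price policies p : [0,T] → ℝ satisfying ∫₀ᵀ v(p(t))Λ(t) dt = S (with 0 < S < a·∫₀ᵀΛ appropriately bounded so the constant policy is interior), the revenue ∫₀ᵀ p(t)v(p(t))Λ(t) dt is maximized by the constant policy p(t) ≡ p₀ where v(p₀) = S/∫₀ᵀ Λ(t) dt, and moreover p₀ ≥ a/(2b) implies this constant policy strictly dominates any policy with nonconstant v(p(t)) (in the L² sense with weight Λ). -/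
open MeasureTheory intervalIntegral

set_option maxHeartbeats 1000000

/-- Constant optimal price (linear case). Among all measurable price policies `p`
with `a - b * p t ∈ [0,1]` on `[0,T]` and fixed total sales `S`, the constant policy
`p₀ = (a - S/K)/b` (i.e. `v p₀ = S/K`) maximizes the revenue, whose optimal value is
`p₀ * S`; and any policy whose sales rate `v (p t)` is not `Λ`-a.e. equal to `S/K`
yields strictly smaller revenue. -/
theorem stmt8 (T a b S : ℝ) (hT : 0 < T) (ha : 0 < a) (hb : 0 < b)
    (Λ : ℝ → ℝ) (hΛ : ∀ t ∈ Set.Icc 0 T, 0 ≤ Λ t)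
    (hΛint : IntervalIntegrable Λ volume 0 T)
    (hK : 0 < ∫ t in (0:ℝ)..T, Λ t)
    (hS0 : 0 < S) (hS : S ≤ (a / 2) * ∫ t in (0:ℝ)..T, Λ t) :
    ∀ p : ℝ → ℝ, Measurable p →
      (∀ t ∈ Set.Icc 0 T, 0 ≤ a - b * p t ∧ a - b * p t ≤ 1) →
      IntervalIntegrable (fun t => (a - b * p t) * Λ t) volume 0 T →
      IntervalIntegrable (fun t => p t * (a - b * p t) * Λ t) volume 0 T →
      (∫ t in (0:ℝ)..T, (a - b * p t) * Λ t) = S →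
      ((∫ t in (0:ℝ)..T, p t * (a - b * p t) * Λ t)
          ≤ ((a - S / ∫ t in (0:ℝ)..T, Λ t) / b) * S) ∧
      (¬ (∀ᵐ t ∂(volume.restrict (Set.Icc 0 T)),
            Λ t ≠ 0 → a - b * p t = S / ∫ s in (0:ℝ)..T, Λ s) →
        (∫ t in (0:ℝ)..T, p t * (a - b * p t) * Λ t)
          < ((a - S / ∫ t in (0:ℝ)..T, Λ t) / b) * S) := by
  intro p hp hbd hint1 hint2 hpS
  set K := ∫ t in (0:ℝ)..T, Λ t with hKdef
  set c := S / K with hcdef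
  have hKne : K ≠ 0 := ne_of_gt hK
  have hcK : c * K = S := div_mul_cancel₀ S hKne
  have hfun : (fun t => ((a - b * p t) - c)^2 * Λ t)
      = (fun t => (a - c) * ((a - b * p t) * Λ t) - b * (p t * (a - b * p t) * Λ t)
        - c * ((a - b * p t) * Λ t) + c^2 * Λ t) := funext fun t => by ring
  have hg : IntervalIntegrable (fun t => ((a - b * p t) - c)^2 * Λ t) volume 0 T := by
    rw [hfun]
    exact (((hint1.const_mul (a - c)).sub (hint2.const_mul b)).sub
      (hint1.const_mul c)).add (hΛint.const_mul (c^2))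
  set R := ∫ t in (0:ℝ)..T, p t * (a - b * p t) * Λ t with hRdef
  have hc2 : c^2 * K = c * S := by rw [pow_two, mul_assoc, hcK]
  have hIg : (∫ t in (0:ℝ)..T, ((a - b * p t) - c)^2 * Λ t)
      = (a - c) * S - b * R - c * S + c^2 * K := by
    rw [hfun]
    rw [intervalIntegral.integral_add
        (((hint1.const_mul (a - c)).sub (hint2.const_mul b)).sub (hint1.const_mul c))
        (hΛint.const_mul (c^2)),
      intervalIntegral.integral_sub
        ((hint1.const_mul (a - c)).sub (hint2.const_mul b)) (hint1.const_mul c),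
      intervalIntegral.integral_sub (hint1.const_mul (a - c)) (hint2.const_mul b),
      intervalIntegral.integral_const_mul, intervalIntegral.integral_const_mul,
      intervalIntegral.integral_const_mul, intervalIntegral.integral_const_mul,
      hpS]
  have hI0 : 0 ≤ ∫ t in (0:ℝ)..T, ((a - b * p t) - c)^2 * Λ t :=
    intervalIntegral.integral_nonneg hT.le fun u hu => mul_nonneg (sq_nonneg _) (hΛ u hu)
  clear_value K c R
  constructor
  · rw [div_mul_eq_mul_div, le_div_iff₀ hb]
    nlinarith [hIg, hI0, hc2]
  · intro hne
    have hIpos : 0 < ∫ t in (0:ℝ)..T, ((a - b * p t) - c)^2 * Λ t := by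
      rcases lt_or_eq_of_le hI0 with h | h
      · exact h
      exfalso
      apply hne
      have hres : volume.restrict (Set.Icc (0:ℝ) T) = volume.restrict (Set.Ioc 0 T) :=
        Measure.restrict_congr_set Ioc_ae_eq_Icc.symm
      rw [hres]
      have hnn : 0 ≤ᵐ[volume.restrict (Set.Ioc (0:ℝ) T)]
          fun t => ((a - b * p t) - c)^2 * Λ t := by
        filter_upwards [ae_restrict_mem measurableSet_Ioc] with t ht
        exact mul_nonneg (sq_nonneg _) (hΛ t (Set.Ioc_subset_Icc_self ht))
      have hzero : (fun t => ((a - b * p t) - c)^2 * Λ t)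
          =ᵐ[volume.restrict (Set.Ioc (0:ℝ) T)] 0 :=
        (intervalIntegral.integral_eq_zero_iff_of_le_of_nonneg_ae hT.le hnn hg).mp h.symm
      filter_upwards [hzero] with t ht hΛt
      simp only [Pi.zero_apply] at ht
      rcases mul_eq_zero.mp ht with h2 | h2
      · have h3 : (a - b * p t) - c = 0 := by
          have := sq_eq_zero_iff.mp h2
          exact this
        linarith
      · exact absurd h2 hΛt
    rw [div_mul_eq_mul_div, lt_div_iff₀ hb]
    nlinarith [hIg, hIpos, hc2]
end

section
/- (Normalization via TVM weight, linear case.) With the weighted objective ∫₀ᵀ φ(t)·p(t)·v(p(t))·Λ(t) dt and v(p) = a - b·p, substituting w(t) = v(p(t)) the integrand becomes φ(t)·Λ(t)·(a·w(t) - w(t)²)/b; for fixed sales ∫₀ᵀ w(t)Λ(t)dt = S, the unique maximizer over measurable w is w(t) = (1/2)(a + q·b/φ(t)) Λ-a.e., where q = (2S - a·K)/(b·I), K = ∫₀ᵀΛ, I = ∫₀ᵀ Λ/φ, provided φ(t) > 0 and the resulting w stays in (0, a). -/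
set_option maxHeartbeats 2000000


open MeasureTheory intervalIntegral

/-- Normalization via TVM weight (linear case): with weighted objective
`∫₀ᵀ φ Λ (a*w - w²)/b` and fixed sales `∫₀ᵀ w Λ = S`, the candidate
`w⋆ t = (1/2)*(a + q*b/φ t)` with `q = (2S - aK)/(bI)` is the unique maximizer
(up to `Λ`-a.e. equality) among all admissible measurable `w`. -/
theorem stmt11 (T a b S : ℝ) (hT : 0 < T) (ha : 0 < a) (hb : 0 < b)
    (Λ φ : ℝ → ℝ) (hΛ : ∀ t ∈ Set.Icc 0 T, 0 ≤ Λ t) (hφmeas : Measurable φ)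
    (hφ : ∀ t ∈ Set.Icc 0 T, 0 < φ t)
    (hΛint : IntervalIntegrable Λ volume 0 T)
    (hIint : IntervalIntegrable (fun t => Λ t / φ t) volume 0 T)
    (hK : 0 < ∫ t in (0:ℝ)..T, Λ t)
    (hI : 0 < ∫ t in (0:ℝ)..T, Λ t / φ t)
    -- the candidate maximizer
    (q : ℝ)
    (hq : q = (2 * S - a * ∫ t in (0:ℝ)..T, Λ t) / (b * ∫ t in (0:ℝ)..T, Λ t / φ t))
    (wstar : ℝ → ℝ) (hwstar : ∀ t, wstar t = (1 / 2) * (a + q * b / φ t))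
    (hrange : ∀ t ∈ Set.Icc 0 T, wstar t ∈ Set.Ioo 0 a)
    (hwstarSales : IntervalIntegrable (fun t => wstar t * Λ t) volume 0 T)
    (hwstarObj :
      IntervalIntegrable (fun t => φ t * Λ t * (a * wstar t - wstar t ^ 2) / b) volume 0 T)
    (hwstarS : (∫ t in (0:ℝ)..T, wstar t * Λ t) = S) :
    ∀ w : ℝ → ℝ, Measurable w →
      IntervalIntegrable (fun t => w t * Λ t) volume 0 T →
      IntervalIntegrable (fun t => φ t * Λ t * (a * w t - w t ^ 2) / b) volume 0 T →
      (∫ t in (0:ℝ)..T, w t * Λ t) = S →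
      ((∫ t in (0:ℝ)..T, φ t * Λ t * (a * w t - w t ^ 2) / b)
          ≤ ∫ t in (0:ℝ)..T, φ t * Λ t * (a * wstar t - wstar t ^ 2) / b) ∧
      ((∫ t in (0:ℝ)..T, φ t * Λ t * (a * w t - w t ^ 2) / b)
          = (∫ t in (0:ℝ)..T, φ t * Λ t * (a * wstar t - wstar t ^ 2) / b)
        ↔ ∀ᵐ t ∂(volume.restrict (Set.Icc 0 T)), Λ t ≠ 0 → w t = wstar t) := by

  intro w hwmeas hwSales hwObj hwS
  have hTle : (0:ℝ) ≤ T := hT.le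
  set F : ℝ → ℝ := fun t => φ t * Λ t * (a * wstar t - wstar t ^ 2) / b
      - φ t * Λ t * (a * w t - w t ^ 2) / b - q * (w t * Λ t - wstar t * Λ t) with hF
  clear_value F
  have hFint : IntervalIntegrable F volume 0 T := by
    rw [hF]
    exact (hwstarObj.sub hwObj).sub ((hwSales.sub hwstarSales).const_mul q)
  have hsum : (∫ t in (0:ℝ)..T, F t)
      = (∫ t in (0:ℝ)..T, φ t * Λ t * (a * wstar t - wstar t ^ 2) / b)
        - (∫ t in (0:ℝ)..T, φ t * Λ t * (a * w t - w t ^ 2) / b) := by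
    simp only [hF]
    rw [intervalIntegral.integral_sub (hwstarObj.sub hwObj)
          ((hwSales.sub hwstarSales).const_mul q),
        intervalIntegral.integral_sub hwstarObj hwObj,
        intervalIntegral.integral_const_mul,
        intervalIntegral.integral_sub hwSales hwstarSales, hwS, hwstarS]
    ring
  have hFeq : ∀ t ∈ Set.Icc (0:ℝ) T, F t = Λ t * φ t * (w t - wstar t) ^ 2 / b := by
    intro t ht
    have hφt : φ t ≠ 0 := (hφ t ht).ne'
    simp only [hF, hwstar t]
    field_simp
    ring
  have hFnn : ∀ t ∈ Set.Icc (0:ℝ) T, 0 ≤ F t := by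
    intro t ht
    rw [hFeq t ht]
    have h1 := hΛ t ht
    have h2 := (hφ t ht).le
    positivity
  have h0 : 0 ≤ ∫ t in (0:ℝ)..T, F t :=
    intervalIntegral.integral_nonneg hTle (fun u hu => hFnn u hu)
  refine ⟨by linarith, ?_⟩
  have hIoc : (∫ t in (0:ℝ)..T, F t) = ∫ t in Set.Ioc 0 T, F t :=
    intervalIntegral.integral_of_le hTle
  have hFae : (0:ℝ → ℝ) ≤ᵐ[volume.restrict (Set.Ioc 0 T)] F := by
    filter_upwards [ae_restrict_mem measurableSet_Ioc] with t ht
    exact hFnn t (Set.Ioc_subset_Icc_self ht)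
  have hzero : (∫ t in Set.Ioc (0:ℝ) T, F t) = 0
      ↔ F =ᵐ[volume.restrict (Set.Ioc 0 T)] 0 := by
    have hFon : IntegrableOn F (Set.Ioc 0 T) volume := hFint.1
    exact MeasureTheory.integral_eq_zero_iff_of_nonneg_ae hFae hFon
  have hrestr : volume.restrict (Set.Ioc (0:ℝ) T) = volume.restrict (Set.Icc 0 T) :=
    Measure.restrict_congr_set Ioc_ae_eq_Icc
  constructor
  · intro hEq
    have hFz : (∫ t in Set.Ioc (0:ℝ) T, F t) = 0 := by rw [← hIoc, hsum, hEq]; ring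
    have hF0 : F =ᵐ[volume.restrict (Set.Ioc 0 T)] 0 := hzero.mp hFz
    rw [← hrestr]
    filter_upwards [hF0, ae_restrict_mem measurableSet_Ioc] with t ht0 htm hΛt
    have htIcc : t ∈ Set.Icc (0:ℝ) T := Set.Ioc_subset_Icc_self htm
    have hfe := hFeq t htIcc
    have h0' : Λ t * φ t * (w t - wstar t) ^ 2 / b = 0 := by
      rw [← hfe]; exact ht0
    have hΛpos : 0 < Λ t := lt_of_le_of_ne (hΛ t htIcc) (Ne.symm hΛt)
    have hφt := hφ t htIcc
    have hD2 : (w t - wstar t) ^ 2 = 0 := by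
      by_contra h
      have hsq : 0 < (w t - wstar t) ^ 2 := (sq_nonneg _).lt_of_ne (Ne.symm h)
      have : 0 < Λ t * φ t * (w t - wstar t) ^ 2 / b := by positivity
      linarith
    have := pow_eq_zero_iff (n := 2) (by norm_num) |>.mp hD2
    linarith [sub_eq_zero.mp this]
  · intro hae
    have hF0 : F =ᵐ[volume.restrict (Set.Ioc 0 T)] 0 := by
      rw [hrestr]
      filter_upwards [hae, ae_restrict_mem measurableSet_Icc] with t ht htm
      have hfe := hFeq t htm
      by_cases hΛ0 : Λ t = 0
      · simp [hfe, hΛ0]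
      · have hw := ht hΛ0
        simp [hfe, hw]
    have hFz : (∫ t in Set.Ioc (0:ℝ) T, F t) = 0 := hzero.mpr hF0
    have : (∫ t in (0:ℝ)..T, F t) = 0 := by rw [hIoc]; exact hFz
    linarith [hsum ▸ this]
end
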